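/- Let d₁, d₂ and λ be positive real constants and let g be a zero-free analytic function on the open half-plane {w ∈ ℂ : Re w > 0} satisfying log⁺|g(w)| ≤ d₁ + d₂|w|^λ there. Then for every α with 0 < α < π/2 there exists μ_α > 0 such that log⁺|1/g(w)| ≤ μ_α·|w|^{1+λ} for all w with |arg w| ≤ α and |w| sufficiently large. -/

import Mathlib

open Metric Complex Set

/-- A nonvanishing holomorphic function on the unit ball has a holomorphic logarithm. -/
lemma exists_log_on_ball_PL {h : ℂ → ℂ} (hd : DifferentiableOn ℂ h (ball (0:ℂ) 1))
    (hnz : ∀ z ∈ ball (0:ℂ) 1, h z ≠ 0) :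
    ∃ F : ℂ → ℂ, DifferentiableOn ℂ F (ball (0:ℂ) 1) ∧
      ∀ z ∈ ball (0:ℂ) 1, Complex.exp (F z) = h z := by
  have hball : IsOpen (ball (0:ℂ) 1) := isOpen_ball
  -- the logarithmic derivative
  set lder : ℂ → ℂ := fun z => deriv h z / h z with hlderdef
  have hlder : DifferentiableOn ℂ lder (ball (0:ℂ) 1) := by
    have h1 : AnalyticOnNhd ℂ h (ball (0:ℂ) 1) := hd.analyticOnNhd hball
    have h2 : AnalyticOnNhd ℂ (deriv h) (ball (0:ℂ) 1) := h1.deriv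
    exact (h2.div h1 hnz).differentiableOn
  -- Taylor coefficients of lder at 0
  set a : ℕ → ℂ := fun n => ((Nat.factorial n : ℕ) : ℂ)⁻¹ * iteratedDeriv n lder 0 with hadef
  have htaylor : ∀ z ∈ ball (0:ℂ) 1, HasSum (fun n : ℕ => a n * z ^ n) (lder z) := by
    intro z hz
    have := Complex.hasSum_taylorSeries_on_ball hlder hz
    refine this.congr_fun fun n => ?_
    simp only [hadef, sub_zero, smul_eq_mul]
    ring
  -- the candidate primitive
  set F : ℂ → ℂ := fun w => Complex.log (h 0) + ∑' n : ℕ, a n / ((n : ℂ) + 1) * w ^ (n + 1)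
    with hFdef
  have hF0 : F 0 = Complex.log (h 0) := by
    simp only [hFdef]
    have h0 : ∀ n : ℕ, a n / ((n : ℂ) + 1) * (0:ℂ) ^ (n + 1) = 0 := fun n => by simp
    rw [tsum_congr h0, tsum_zero, add_zero]
  -- F has derivative lder z at each point of the ball
  have hder : ∀ z ∈ ball (0:ℂ) 1, HasDerivAt F (lder z) z := by
    intro z hz
    rw [mem_ball_zero_iff] at hz
    set s : ℝ := (‖z‖ + 1) / 2 with hsdef
    have hs0 : 0 < s := by positivity
    have hzs : ‖z‖ < s := by rw [hsdef]; linarith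
    have hs1 : s < 1 := by rw [hsdef]; linarith
    set x : ℝ := (s + 1) / 2 with hxdef
    have hsx : s < x := by rw [hxdef]; linarith
    have hx0 : 0 < x := lt_trans hs0 hsx
    have hx1 : x < 1 := by rw [hxdef]; linarith
    -- summability of the Taylor series at x gives coefficient bounds
    have hxball : (x : ℂ) ∈ ball (0:ℂ) 1 := by
      rw [mem_ball_zero_iff]; simpa [abs_of_pos hx0] using hx1
    have hsumx : Summable fun n : ℕ => ‖a n * (x : ℂ) ^ n‖ :=
      (summable_norm_iff.mpr (htaylor _ hxball).summable)
    set C : ℝ := ∑' n : ℕ, ‖a n * (x : ℂ) ^ n‖ with hCdef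
    have hC : ∀ n : ℕ, ‖a n‖ * x ^ n ≤ C := by
      intro n
      have hle := Summable.le_tsum hsumx n (fun m _ => norm_nonneg _)
      rw [hCdef]
      calc ‖a n‖ * x ^ n = ‖a n * (x:ℂ) ^ n‖ := by
            simp [norm_mul, norm_pow, Real.norm_eq_abs, abs_of_pos hx0]
        _ ≤ _ := hle
    have hCnn : 0 ≤ C := le_trans (by positivity) (hC 0)
    -- derivative of the series, term by term, on the ball of radius s
    have key := hasDerivAt_tsum_of_isPreconnected
      (u := fun n : ℕ => C * (s / x) ^ n)
      (g := fun (n : ℕ) (w : ℂ) => a n / ((n : ℂ) + 1) * w ^ (n + 1))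
      (g' := fun (n : ℕ) (w : ℂ) => a n * w ^ n)
      (t := ball (0:ℂ) s) (y₀ := 0) (y := z)
      ?_ isOpen_ball (convex_ball _ _).isPreconnected ?_ ?_ (by simp [mem_ball_zero_iff, hs0]) ?_
      (by simpa [mem_ball_zero_iff] using hzs)
    · have hzb : z ∈ ball (0:ℂ) 1 := by rw [mem_ball_zero_iff]; exact lt_trans hzs hs1
      have : (∑' n : ℕ, a n * z ^ n) = lder z := (htaylor z hzb).tsum_eq
      rw [this] at key
      exact key.const_add _
    · exact (summable_geometric_of_lt_one (by positivity) (by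
        rw [div_lt_one hx0]; exact hsx)).mul_left C
    · intro n w _
      have h1 : HasDerivAt (fun w : ℂ => w ^ (n + 1)) (((n : ℂ) + 1) * w ^ n) w := by
        simpa using hasDerivAt_pow (n + 1) w
      have h2 := h1.const_mul (a n / ((n : ℂ) + 1))
      have hne : ((n : ℂ) + 1) ≠ 0 := Nat.cast_add_one_ne_zero n
      rw [← mul_assoc, div_mul_cancel₀ _ hne] at h2
      exact h2
    · intro n w hw
      rw [mem_ball_zero_iff] at hw
      have h1 : ‖a n * w ^ n‖ ≤ ‖a n‖ * s ^ n := by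
        rw [norm_mul, norm_pow]
        exact mul_le_mul_of_nonneg_left (pow_le_pow_left₀ (norm_nonneg _) hw.le n)
          (norm_nonneg _)
      refine h1.trans ?_
      have hxs : x * (s / x) = s := by field_simp
      have hxx : ‖a n‖ * s ^ n = (‖a n‖ * x ^ n) * (s / x) ^ n := by
        rw [mul_assoc, ← mul_pow, hxs]
      rw [hxx]
      exact mul_le_mul_of_nonneg_right (hC n) (by positivity)
    · have hz0 : (fun n : ℕ => a n / ((n : ℂ) + 1) * (0:ℂ) ^ (n + 1)) = fun _ => 0 := by
        funext n; simp
      rw [hz0]; exact summable_zero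
  -- h * exp (-F) is constant on the ball
  have hq : ∀ z ∈ ball (0:ℂ) 1, h z * Complex.exp (-F z) = 1 := by
    have hconst : ∀ z ∈ ball (0:ℂ) 1,
        HasDerivWithinAt (fun w => h w * Complex.exp (-F w)) 0 (ball (0:ℂ) 1) z := by
      intro z hz
      have hh : HasDerivAt h (deriv h z) z :=
        (hd.differentiableAt (hball.mem_nhds hz)).hasDerivAt
      have hFz : HasDerivAt F (lder z) z := hder z hz
      have he : HasDerivAt (fun w => Complex.exp (-F w)) (Complex.exp (-F z) * (-lder z)) z :=
        (hFz.neg).cexp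
      have := hh.mul he
      have heq : deriv h z * Complex.exp (-F z) + h z * (Complex.exp (-F z) * -lder z) = 0 := by
        have hz0 : h z ≠ 0 := hnz z hz
        simp only [hlderdef]
        field_simp
        ring
      rw [heq] at this
      exact this.hasDerivWithinAt
    intro z hz
    have h0mem : (0:ℂ) ∈ ball (0:ℂ) 1 := by simp
    have := Convex.norm_image_sub_le_of_norm_hasDerivWithin_le (C := 0) (f' := fun _ => (0:ℂ))
      hconst (fun w _ => by simp) (convex_ball _ _) h0mem hz
    simp only [norm_zero, zero_mul, norm_le_zero_iff, sub_eq_zero] at this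
    rw [this, hF0]
    rw [Complex.exp_neg, Complex.exp_log (hnz 0 h0mem)]
    exact mul_inv_cancel₀ (hnz 0 h0mem)
  refine ⟨F, ?_, ?_⟩
  · intro z hz
    exact ((hder z hz).differentiableAt).differentiableWithinAt
  · intro z hz
    have := hq z hz
    rw [Complex.exp_neg] at this
    field_simp at this
    exact this.symm


/-- Borel–Carathéodory type estimate derived from the Schwarz lemma. -/
lemma borel_caratheodory_PL {F : ℂ → ℂ} {R₁ : ℝ} (hR : 0 < R₁)
    (hF : DifferentiableOn ℂ F (ball (0:ℂ) R₁)) {A : ℝ}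
    (hA : ∀ z ∈ ball (0:ℂ) R₁, (F z).re ≤ A) {z : ℂ} (hz : z ∈ ball (0:ℂ) R₁) :
    ‖F z - F 0‖ ≤ 2 * (A + 1 - (F 0).re) * ‖z‖ / (R₁ - ‖z‖) := by
  have h0mem : (0:ℂ) ∈ ball (0:ℂ) R₁ := mem_ball_self hR
  set B : ℝ := A + 1 - (F 0).re with hBdef
  have hB : 1 ≤ B := by
    have := hA 0 h0mem
    rw [hBdef]; linarith
  have hB0 : 0 < B := by linarith
  set Φ : ℂ → ℂ := fun ζ => F ζ - F 0 with hΦdef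
  have hΦre : ∀ ζ ∈ ball (0:ℂ) R₁, (Φ ζ).re ≤ B - 1 := by
    intro ζ hζ
    have := hA ζ hζ
    simp only [hΦdef, Complex.sub_re, hBdef]
    linarith
  have hdenom : ∀ ζ ∈ ball (0:ℂ) R₁, ((2*B : ℝ) : ℂ) - Φ ζ ≠ 0 := by
    intro ζ hζ hcon
    have hre : (((2*B : ℝ) : ℂ) - Φ ζ).re = 0 := by rw [hcon]; simp
    simp only [Complex.sub_re, Complex.ofReal_re] at hre
    have := hΦre ζ hζ
    linarith
  set ψ : ℂ → ℂ := fun ζ => Φ ζ / (((2*B : ℝ) : ℂ) - Φ ζ) with hψdef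
  have hψ0 : ψ 0 = 0 := by simp [hψdef, hΦdef]
  have hΦd : DifferentiableOn ℂ Φ (ball (0:ℂ) R₁) := hF.sub_const _
  have hψd : DifferentiableOn ℂ ψ (ball (0:ℂ) R₁) :=
    hΦd.div ((differentiableOn_const _).sub hΦd) hdenom
  have habs : ∀ ζ ∈ ball (0:ℂ) R₁, ‖Φ ζ‖ < ‖((2*B:ℝ):ℂ) - Φ ζ‖ := by
    intro ζ hζ
    rw [Complex.norm_def, Complex.norm_def]
    apply Real.sqrt_lt_sqrt (Complex.normSq_nonneg _)
    have hre := hΦre ζ hζ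
    simp only [Complex.normSq_apply, Complex.sub_re, Complex.sub_im, Complex.ofReal_re,
      Complex.ofReal_im, zero_sub, neg_mul, neg_neg]
    nlinarith [hB, hre]
  have hmaps : MapsTo ψ (ball (0:ℂ) R₁) (ball (ψ 0) 1) := by
    intro ζ hζ
    rw [hψ0, mem_ball_zero_iff]
    have h1 := habs ζ hζ
    have h2 : (0:ℝ) ≤ ‖Φ ζ‖ := norm_nonneg _
    simp only [hψdef, norm_div]
    rw [div_lt_one (lt_of_le_of_lt h2 h1)]
    exact h1
  have hSch := Complex.dist_le_div_mul_dist_of_mapsTo_ball hψd (hmaps.mono_right ball_subset_closedBall) hz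
  rw [hψ0] at hSch
  simp only [dist_zero_right] at hSch
  -- recover the bound on Φ
  have hzR : ‖z‖ < R₁ := by rwa [mem_ball_zero_iff] at hz
  have hψz : ‖ψ z‖ ≤ ‖z‖ / R₁ := by
    calc ‖ψ z‖ ≤ 1 / R₁ * ‖z‖ := hSch
      _ = ‖z‖ / R₁ := by ring
  have hrec : Φ z = ((((2*B:ℝ):ℂ)) - Φ z) * ψ z := by
    rw [hψdef]
    rw [mul_div_cancel₀ _ (hdenom z hz)]
  have hΦbound : ‖Φ z‖ ≤ (2*B + ‖Φ z‖) * (‖z‖ / R₁) := by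
    calc ‖Φ z‖ = ‖(((2*B:ℝ):ℂ) - Φ z) * ψ z‖ := by rw [← hrec]
      _ = ‖(((2*B:ℝ):ℂ) - Φ z)‖ * ‖ψ z‖ := norm_mul _ _
      _ ≤ (2*B + ‖Φ z‖) * (‖z‖ / R₁) := by
          apply mul_le_mul _ hψz (norm_nonneg _) (by positivity)
          calc ‖(((2*B:ℝ):ℂ) - Φ z)‖ ≤ ‖(((2*B:ℝ):ℂ))‖ + ‖Φ z‖ := norm_sub_le _ _
            _ = 2*B + ‖Φ z‖ := by
                rw [Complex.norm_real, Real.norm_eq_abs, abs_of_pos (by linarith)]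
  have key : ‖Φ z‖ ≤ 2 * B * ‖z‖ / (R₁ - ‖z‖) := by
    rw [le_div_iff₀ (by linarith : (0:ℝ) < R₁ - ‖z‖)]
    have h3 : ‖Φ z‖ * R₁ ≤ (2*B + ‖Φ z‖) * ‖z‖ := by
      have := mul_le_mul_of_nonneg_right hΦbound (le_of_lt hR)
      calc ‖Φ z‖ * R₁ ≤ (2*B + ‖Φ z‖) * (‖z‖ / R₁) * R₁ := this
        _ = (2*B + ‖Φ z‖) * ‖z‖ := by field_simp
    nlinarith [norm_nonneg (Φ z), norm_nonneg z]
  exact key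

set_option maxHeartbeats 1000000 in
/-- Phragmén–Lindelöf type estimate: if `g` is zero-free and analytic
on the open right half-plane with `log⁺|g(w)| ≤ d₁ + d₂|w|^λ` there, then for each
`0 < α < π/2` there is `μ_α > 0` with `log⁺|1/g(w)| ≤ μ_α |w|^{1+λ}` for all `w`
with `|arg w| ≤ α` of sufficiently large modulus. -/
theorem phragmen_lindelof_zero_free
    (d₁ d₂ lam : ℝ) (hd₁ : 0 < d₁) (hd₂ : 0 < d₂) (hlam : 0 < lam)
    (g : ℂ → ℂ)
    (hg : DifferentiableOn ℂ g {w : ℂ | 0 < w.re})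
    (hzf : ∀ w : ℂ, 0 < w.re → g w ≠ 0)
    (hbd : ∀ w : ℂ, 0 < w.re →
        max (Real.log (‖g w‖)) 0 ≤ d₁ + d₂ * ‖w‖ ^ lam) :
    ∀ a : ℝ, 0 < a → a < Real.pi / 2 →
      ∃ μ : ℝ, 0 < μ ∧ ∃ R : ℝ, 0 < R ∧ ∀ w : ℂ, |Complex.arg w| ≤ a →
        R ≤ ‖w‖ →
        max (Real.log (‖1 / g w‖)) 0 ≤ μ * ‖w‖ ^ (1 + lam) := by
  intro a ha0 ha2
  have hpi : 0 < Real.pi := Real.pi_pos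
  set c : ℝ := Real.cos a with hcdef
  clear_value c
  have hc0 : 0 < c := by rw [hcdef]; exact Real.cos_pos_of_mem_Ioo ⟨by linarith, ha2⟩
  have hc1 : c ≤ 1 := by rw [hcdef]; exact Real.cos_le_one a
  -- the Möbius transform and the transplanted function
  set T : ℂ → ℂ := fun ζ => (1 + ζ) / (1 - ζ) with hTdef
  set h : ℂ → ℂ := fun ζ => g (T ζ) with hhdef
  have hsub : ∀ ζ ∈ ball (0:ℂ) 1, (1:ℂ) - ζ ≠ 0 := by
    intro ζ hζ hcon
    rw [mem_ball_zero_iff] at hζ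
    rw [sub_eq_zero] at hcon
    rw [← hcon] at hζ
    simp at hζ
  have hTre : ∀ ζ ∈ ball (0:ℂ) 1, 0 < (T ζ).re := by
    intro ζ hζ
    have h1 := hsub ζ hζ
    rw [mem_ball_zero_iff] at hζ
    have hns : Complex.normSq ζ < 1 := by
      have h2 : ‖ζ‖ < 1 := hζ
      rw [← Complex.sq_norm]
      nlinarith [norm_nonneg ζ]
    rw [hTdef]
    simp only [Complex.div_re]
    rw [← add_div]
    have hnum : (1+ζ).re * (1-ζ).re + (1+ζ).im * (1-ζ).im = 1 - Complex.normSq ζ := by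
      simp [Complex.normSq_apply, Complex.add_re, Complex.add_im, Complex.sub_re,
        Complex.sub_im]
      ring
    rw [hnum]
    have hd : 0 < Complex.normSq (1 - ζ) := Complex.normSq_pos.mpr h1
    exact div_pos (by linarith) hd
  have hTabs : ∀ ζ ∈ ball (0:ℂ) 1, ‖T ζ‖ ≤ 2 / (1 - ‖ζ‖) := by
    intro ζ hζ
    have h1 := hsub ζ hζ
    rw [mem_ball_zero_iff] at hζ
    rw [hTdef]
    simp only [norm_div]
    apply div_le_div₀ (by norm_num)
    · calc ‖1 + ζ‖ ≤ ‖(1:ℂ)‖ + ‖ζ‖ := norm_add_le _ _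
        _ ≤ 2 := by
            rw [norm_one]
            have : ‖ζ‖ = ‖ζ‖ := rfl
            linarith [hζ, this ▸ hζ]
    · linarith
    · calc 1 - ‖ζ‖ = ‖(1:ℂ)‖ - ‖ζ‖ := by simp
        _ ≤ ‖(1:ℂ) - ζ‖ := norm_sub_norm_le _ _
        _ = ‖1 - ζ‖ := rfl
  have hdh : DifferentiableOn ℂ h (ball (0:ℂ) 1) := by
    rw [hhdef]
    apply DifferentiableOn.comp hg
    · rw [hTdef]
      exact DifferentiableOn.div ((differentiable_const _).add differentiable_id).differentiableOn
        ((differentiable_const _).sub differentiable_id).differentiableOn hsub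
    · intro ζ hζ
      exact hTre ζ hζ
  have hnzh : ∀ ζ ∈ ball (0:ℂ) 1, h ζ ≠ 0 := fun ζ hζ => hzf _ (hTre ζ hζ)
  obtain ⟨F, hFd, hFexp⟩ := exists_log_on_ball_PL hdh hnzh
  have hFre : ∀ ζ ∈ ball (0:ℂ) 1, (F ζ).re = Real.log (‖h ζ‖) := by
    intro ζ hζ
    rw [← hFexp ζ hζ, Complex.norm_exp, Real.log_exp]
  have hFbd : ∀ ζ ∈ ball (0:ℂ) 1, (F ζ).re ≤ d₁ + d₂ * (2 / (1 - ‖ζ‖)) ^ lam := by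
    intro ζ hζ
    rw [hFre ζ hζ]
    have h1 : Real.log (‖h ζ‖) ≤ d₁ + d₂ * ‖T ζ‖ ^ lam :=
      le_trans (le_max_left _ _) (hbd _ (hTre ζ hζ))
    refine h1.trans ?_
    have h2 : ‖T ζ‖ ^ lam ≤ (2 / (1 - ‖ζ‖)) ^ lam :=
      Real.rpow_le_rpow (norm_nonneg _) (hTabs ζ hζ) hlam.le
    nlinarith [h2, hd₂.le]
  -- the constants
  set K : ℝ := 16 / c with hKdef
  clear_value K
  have hK0 : 0 < K := by rw [hKdef]; exact div_pos (by norm_num) hc0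
  set μ : ℝ := K * (d₁ + 1 + ‖F 0‖) + d₂ * K ^ (1 + lam) + ‖F 0‖ with hμdef
  clear_value μ
  have hμ0 : 0 < μ := by
    rw [hμdef]
    have h1 : 0 < K * (d₁ + 1 + ‖F 0‖) := mul_pos hK0 (by linarith [norm_nonneg (F 0)])
    have h2 : 0 ≤ d₂ * K ^ (1 + lam) := mul_nonneg hd₂.le (Real.rpow_nonneg hK0.le _)
    have h3 : 0 ≤ ‖F 0‖ := norm_nonneg _
    linarith
  refine ⟨μ, hμ0, 1, one_pos, ?_⟩
  intro w harg hrw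
  set r : ℝ := ‖w‖ with hrdef
  clear_value r
  have hr1 : 1 ≤ r := hrw
  have hr0 : 0 < r := by linarith
  have hw0 : w ≠ 0 := by
    intro hcon
    rw [hcon, norm_zero] at hrdef
    linarith [hrdef ▸ hr1]
  -- real part of w is large
  have hargpi : |Complex.arg w| ≤ Real.pi := abs_arg_le_pi w
  have hcosarg : c ≤ Real.cos (Complex.arg w) := by
    have h1 := Real.cos_le_cos_of_nonneg_of_le_pi (abs_nonneg (Complex.arg w))
      (show a ≤ Real.pi by linarith) harg
    rw [Real.cos_abs] at h1
    rw [hcdef]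
    exact h1
  have hrew : r * c ≤ w.re := by
    rw [← Complex.norm_mul_cos_arg w, ← hrdef]
    exact mul_le_mul_of_nonneg_left hcosarg hr0.le
  have hwre : 0 < w.re := lt_of_lt_of_le (mul_pos hr0 hc0) hrew
  have hw1 : w + 1 ≠ 0 := by
    intro hcon
    have : (w + 1).re = 0 := by rw [hcon]; simp
    simp only [Complex.add_re, Complex.one_re] at this
    linarith
  -- the preimage point
  set ζ : ℂ := (w - 1) / (w + 1) with hζdef
  clear_value ζ
  have hTζ : T ζ = w := by
    rw [hTdef, hζdef]
    field_simp
    ring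
  set δ : ℝ := c / (2 * r) with hδdef
  clear_value δ
  have hδ0 : 0 < δ := by rw [hδdef]; exact div_pos hc0 (by linarith)
  have hδhalf : δ ≤ 1 / 2 := by
    rw [hδdef, div_le_div_iff₀ (by linarith) (by norm_num)]
    nlinarith
  have hζnorm : ‖ζ‖ ≤ 1 - δ := by
    have hnsζ : Complex.normSq ζ = Complex.normSq (w - 1) / Complex.normSq (w + 1) := by
      rw [hζdef, map_div₀]
    have hdiff : Complex.normSq (w + 1) - Complex.normSq (w - 1) = 4 * w.re := by
      simp [Complex.normSq_apply, Complex.add_re, Complex.add_im, Complex.sub_re,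
        Complex.sub_im]
      ring
    have hns1 : Complex.normSq (w + 1) ≤ 4 * r ^ 2 := by
      rw [Complex.normSq_eq_norm_sq]
      have h1 : ‖w + 1‖ ≤ r + 1 := by
        calc ‖w + 1‖ ≤ ‖w‖ + ‖(1:ℂ)‖ := norm_add_le _ _
          _ = r + 1 := by rw [norm_one, hrdef]
      nlinarith [norm_nonneg (w + 1)]
    have hnspos : 0 < Complex.normSq (w + 1) := Complex.normSq_pos.mpr hw1
    have hkey : 1 - Complex.normSq ζ ≥ c / r := by
      rw [hnsζ]
      rw [ge_iff_le, le_sub_iff_add_le, div_add_div _ _ (ne_of_gt hr0) (ne_of_gt hnspos)]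
      rw [div_le_one (mul_pos hr0 hnspos)]
      have : c * Complex.normSq (w + 1) + r * Complex.normSq (w - 1)
          = c * Complex.normSq (w + 1) + r * (Complex.normSq (w + 1) - 4 * w.re) := by
        rw [← hdiff]; ring
      rw [this]
      nlinarith [hrew, hns1, hnspos, hr1, hc1, hc0]
    have htnn : 0 ≤ ‖ζ‖ := norm_nonneg _
    have ht2 : ‖ζ‖ ^ 2 = Complex.normSq ζ := by
      rw [Complex.sq_norm]
    have h2δ : 2 * δ = c / r := by rw [hδdef]; field_simp
    have hsq : ‖ζ‖ ^ 2 ≤ (1 - δ) ^ 2 := by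
      rw [ht2]
      nlinarith [hkey, h2δ, hδ0, hδhalf]
    calc ‖ζ‖ = Real.sqrt (‖ζ‖ ^ 2) := (Real.sqrt_sq htnn).symm
      _ ≤ Real.sqrt ((1 - δ) ^ 2) := Real.sqrt_le_sqrt hsq
      _ = 1 - δ := Real.sqrt_sq (by linarith)
  have hζball1 : ζ ∈ ball (0:ℂ) 1 := by
    rw [mem_ball_zero_iff]
    linarith [hζnorm, hδ0]
  -- apply Borel–Carathéodory on the ball of radius 1 - δ/2
  set R₁ : ℝ := 1 - δ / 2 with hR₁def
  clear_value R₁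
  have hR₁0 : 0 < R₁ := by rw [hR₁def]; linarith
  have hR₁1 : R₁ ≤ 1 := by rw [hR₁def]; linarith
  set A : ℝ := d₁ + d₂ * (4 / δ) ^ lam with hAdef
  clear_value A
  have hAbd : ∀ ξ ∈ ball (0:ℂ) R₁, (F ξ).re ≤ A := by
    intro ξ hξ
    have hξ1 : ξ ∈ ball (0:ℂ) 1 := ball_subset_ball hR₁1 hξ
    refine (hFbd ξ hξ1).trans ?_
    rw [hAdef]
    have hξn : ‖ξ‖ < R₁ := by rwa [mem_ball_zero_iff] at hξ
    have h1 : 1 - ‖ξ‖ > δ / 2 := by rw [hR₁def] at hξn; linarith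
    have h2 : 2 / (1 - ‖ξ‖) ≤ 4 / δ := by
      rw [div_le_div_iff₀ (by linarith) hδ0]
      nlinarith [norm_nonneg ξ, hδ0]
    have h3 : (2 / (1 - ‖ξ‖)) ^ lam ≤ (4 / δ) ^ lam :=
      Real.rpow_le_rpow (le_of_lt (div_pos (by norm_num) (by linarith))) h2 hlam.le
    nlinarith [h3, hd₂.le]
  have hζmem : ζ ∈ ball (0:ℂ) R₁ := by
    rw [mem_ball_zero_iff]
    rw [hR₁def]
    linarith [hζnorm, hδ0]
  have hBC := borel_caratheodory_PL hR₁0 (hFd.mono (ball_subset_ball hR₁1)) hAbd hζmem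
  -- massage the bound
  set M : ℝ := A + 1 + ‖F 0‖ with hMdef
  clear_value M
  have hF0A : (F 0).re ≤ A := hAbd 0 (mem_ball_self hR₁0)
  have hF0norm : -(F 0).re ≤ ‖F 0‖ := by
    have h1 : |(F 0).re| ≤ ‖F 0‖ := Complex.abs_re_le_norm _
    linarith [neg_abs_le ((F 0).re), abs_nonneg ((F 0).re)]
  have hMA : A + 1 - (F 0).re ≤ M := by rw [hMdef]; linarith
  have hB0pos : 0 ≤ A + 1 - (F 0).re := by linarith
  have hMpos : 0 < M := by
    rw [hMdef, hAdef]
    have : 0 ≤ d₂ * (4 / δ) ^ lam := mul_nonneg hd₂.le (Real.rpow_nonneg (by positivity) _)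
    linarith [norm_nonneg (F 0)]
  have hζle1 : ‖ζ‖ ≤ 1 := by linarith [hζnorm, hδ0]
  have hdenge : δ / 2 ≤ R₁ - ‖ζ‖ := by rw [hR₁def]; linarith [hζnorm]
  have hstep : ‖F ζ - F 0‖ ≤ 4 * M / (δ / 2) := by
    refine hBC.trans ?_
    apply div_le_div₀ (by linarith) ?_ (by linarith) hdenge
    nlinarith [hB0pos, hMA, hζle1, norm_nonneg ζ, hMpos]
  have hKδ : 4 * M / (δ / 2) = K * r * M := by
    have hc' : c ≠ 0 := hc0.ne'
    have hr' : r ≠ 0 := hr0.ne'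
    rw [hKdef, hδdef]
    field_simp
    ring
  rw [hKδ] at hstep
  -- the real part lower bound
  have hrelog : Real.log (‖1 / g w‖) = -(F ζ).re := by
    have hhw : h ζ = g w := by
      show g (T ζ) = g w
      rw [hTζ]
    have h1 : (F ζ).re = Real.log (‖g w‖) := by
      rw [hFre ζ hζball1, hhw]
    rw [one_div, norm_inv, Real.log_inv, h1]
  -- rpow arithmetic
  have hKr : (K * r) ^ lam = K ^ lam * r ^ lam := Real.mul_rpow hK0.le hr0.le
  have hK1 : K ^ (1 + lam) = K * K ^ lam := by
    rw [Real.rpow_add hK0, Real.rpow_one]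
  have hr1l : r ^ (1 + lam) = r * r ^ lam := by
    rw [Real.rpow_add hr0, Real.rpow_one]
  have hrle : r ≤ r ^ (1 + lam) := by
    calc r = r ^ (1:ℝ) := (Real.rpow_one r).symm
      _ ≤ r ^ (1 + lam) := Real.rpow_le_rpow_of_exponent_le hr1 (by linarith)
  have honele : 1 ≤ r ^ (1 + lam) := Real.one_le_rpow hr1 (by linarith)
  have hAle : A ≤ d₁ + d₂ * (K * r) ^ lam := by
    rw [hAdef]
    have h4δ : 4 / δ ≤ K * r := by
      rw [hδdef, hKdef, div_div_eq_mul_div]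
      have e : (16:ℝ) / c * r = 16 * r / c := by ring
      rw [e, div_le_div_iff₀ hc0 hc0]
      nlinarith [hr0.le, hc0.le]
    have h5 : (4 / δ) ^ lam ≤ (K * r) ^ lam :=
      Real.rpow_le_rpow (by positivity) h4δ hlam.le
    nlinarith [h5, hd₂.le]
  have hfinal : -(F ζ).re ≤ μ * r ^ (1 + lam) := by
    have h1 : -(F ζ).re ≤ ‖F ζ - F 0‖ + ‖F 0‖ := by
      have h2 : |(F ζ - F 0).re| ≤ ‖F ζ - F 0‖ := by
        exact Complex.abs_re_le_norm _
      have h3 : (F ζ - F 0).re = (F ζ).re - (F 0).re := by simp [Complex.sub_re]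
      have := neg_abs_le ((F ζ - F 0).re)
      rw [h3] at this h2
      linarith [hF0norm, abs_nonneg ((F ζ).re - (F 0).re)]
    have h2 : K * r * M ≤ K * r * (d₁ + d₂ * (K * r) ^ lam + 1 + ‖F 0‖) := by
      apply mul_le_mul_of_nonneg_left _ (mul_pos hK0 hr0).le
      rw [hMdef]
      linarith [hAle]
    have e1 : K * r * (d₁ + d₂ * (K * r) ^ lam + 1 + ‖F 0‖) + ‖F 0‖
        = K * (d₁ + 1 + ‖F 0‖) * r + d₂ * K ^ (1 + lam) * r ^ (1 + lam) + ‖F 0‖ := by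
      rw [hKr, hK1, hr1l]
      ring
    have e2 : K * (d₁ + 1 + ‖F 0‖) * r ≤ K * (d₁ + 1 + ‖F 0‖) * r ^ (1 + lam) :=
      mul_le_mul_of_nonneg_left hrle
        (mul_nonneg hK0.le (by linarith [norm_nonneg (F 0)]))
    have e3 : ‖F 0‖ ≤ ‖F 0‖ * r ^ (1 + lam) :=
      le_mul_of_one_le_right (norm_nonneg _) honele
    have e4 : μ * r ^ (1 + lam) = K * (d₁ + 1 + ‖F 0‖) * r ^ (1 + lam)
        + d₂ * K ^ (1 + lam) * r ^ (1 + lam) + ‖F 0‖ * r ^ (1 + lam) := by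
      rw [hμdef]; ring
    calc -(F ζ).re ≤ ‖F ζ - F 0‖ + ‖F 0‖ := h1
      _ ≤ K * r * M + ‖F 0‖ := add_le_add_left hstep _
      _ ≤ K * r * (d₁ + d₂ * (K * r) ^ lam + 1 + ‖F 0‖) + ‖F 0‖ := add_le_add_left h2 _
      _ = K * (d₁ + 1 + ‖F 0‖) * r + d₂ * K ^ (1 + lam) * r ^ (1 + lam) + ‖F 0‖ := e1
      _ ≤ K * (d₁ + 1 + ‖F 0‖) * r ^ (1 + lam) + d₂ * K ^ (1 + lam) * r ^ (1 + lam)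
          + ‖F 0‖ * r ^ (1 + lam) := by
            refine add_le_add (add_le_add e2 (le_refl _)) e3
      _ = μ * r ^ (1 + lam) := e4.symm
  rw [hrelog]
  apply max_le hfinal
  exact mul_nonneg hμ0.le (Real.rpow_nonneg (by linarith) _)
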